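/- There is no involutive fuzzy complement compatible with the metric-closure operations: if c : [0,1] → [0,1] satisfies c(0) = 1, c(1) = 0, and the De Morgan identity c(max(a,b)) = c(a)·c(b) / (c(a) + c(b) − c(a)·c(b)) for all a, b ∈ [0,1] with (c(a), c(b)) ≠ (0,0) (and c(max(a,b)) = 0 when c(a) = c(b) = 0), then c is not involutive, i.e. there exists x ∈ [0,1] with c(c(x)) ≠ x. -/

import Mathlib

/-- no involutive fuzzy complement is compatible with the metric-closure
operations. If `c : [0,1] → [0,1]` satisfies `c 0 = 1`, `c 1 = 0`, and the De Morgan identity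
`c (max a b) = DT¹_∧ (c a) (c b)` for all `a, b ∈ [0,1]` (with the Dombi T-norm
`DT¹_∧(x,y) = xy/(x+y−xy)` for `(x,y) ≠ (0,0)` and `DT¹_∧(0,0) = 0`), then `c` is not
involutive: there is `x ∈ [0,1]` with `c (c x) ≠ x`. -/
theorem stmt_10 (c : ℝ → ℝ)
    (hmap : ∀ x ∈ Set.Icc (0:ℝ) 1, c x ∈ Set.Icc (0:ℝ) 1)
    (h0 : c 0 = 1) (h1 : c 1 = 0)
    (hDM : ∀ a ∈ Set.Icc (0:ℝ) 1, ∀ b ∈ Set.Icc (0:ℝ) 1,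
      ¬(c a = 0 ∧ c b = 0) →
        c (max a b) = c a * c b / (c a + c b - c a * c b))
    (hDM0 : ∀ a ∈ Set.Icc (0:ℝ) 1, ∀ b ∈ Set.Icc (0:ℝ) 1,
      (c a = 0 ∧ c b = 0) → c (max a b) = 0) :
    ∃ x ∈ Set.Icc (0:ℝ) 1, c (c x) ≠ x := by
  refine ⟨1/2, by norm_num, ?_⟩
  have hh : (1/2 : ℝ) ∈ Set.Icc (0:ℝ) 1 := by norm_num
  by_cases ht : c (1/2) = 0
  · rw [ht, h0]; norm_num
  · have hd := hDM (1/2) hh (1/2) hh (by tauto)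
    simp only [max_self] at hd
    set t := c (1/2) with htdef
    have ht1 : t ≤ 1 := (hmap (1/2) hh).2
    have ht0 : 0 < t := lt_of_le_of_ne (hmap (1/2) hh).1 (Ne.symm ht)
    have hden : t + t - t * t ≠ 0 := by nlinarith
    field_simp at hd
    have heq : t + t - t * t = t := by
      have h2 : (1:ℝ) + 1 - t ≠ 0 := by intro h; linarith
      rw [eq_div_iff h2] at hd
      have ht' : t = 1 := by linarith
      rw [ht']; norm_num
    have hz : t * (1 - t) = 0 := by nlinarith
    have hteq : t = 1 := by
      rcases mul_eq_zero.mp hz with h | h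
      · exact absurd h ht
      · linarith
    rw [hteq, h1]; norm_num
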